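/- Let Ω ⊆ ℝ be an open set and let u_n, b_n : Ω → ℝ (n ≥ −1) be functions, twice differentiable on Ω, satisfying the Toda chain equations b_n' = u_{n+1} − u_n for n ≥ 0 and u_n' = u_n(b_n − b_{n−1}) for n ≥ 0, with initial data u_0(t) = t, b_0(t) = 1/t and b_{−1}(t) = 0 on Ω (so 0 ∉ Ω), and with u_n(t) ≠ 0 on Ω for all n ≥ 0. Then for every integer N ≥ 0 the function V = b_N satisfies the Painlevé-II equation V'' = 2V³ − 4tV + 4(N+1) on Ω, i.e. b_N is a rational solution of Painlevé-II with parameter α = N + 1/2. -/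

import Mathlib

/-- For the Toda chain solution with initial data `u₀(t) = t`,
`b₀(t) = 1/t`, `b₋₁ = 0` on an open set `Ω` (with `0 ∉ Ω` and `uₙ ≠ 0` on `Ω`),
every `b_N` satisfies the Painlevé-II equation
`V'' = 2V³ - 4tV + 4(N+1)`, i.e. `b_N` is a rational solution of Painlevé-II
with parameter `α = N + 1/2`. -/
theorem toda_linear_potential_painleveII
    (Ω : Set ℝ) (hΩopen : IsOpen Ω) (h0 : (0 : ℝ) ∉ Ω)
    (u b : ℤ → ℝ → ℝ)
    (hbd : ∀ n : ℤ, -1 ≤ n → ∀ t ∈ Ω, DifferentiableAt ℝ (b n) t)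
    (hbd2 : ∀ n : ℤ, -1 ≤ n → ∀ t ∈ Ω, DifferentiableAt ℝ (deriv (b n)) t)
    (hud : ∀ n : ℤ, -1 ≤ n → ∀ t ∈ Ω, DifferentiableAt ℝ (u n) t)
    (hud2 : ∀ n : ℤ, -1 ≤ n → ∀ t ∈ Ω, DifferentiableAt ℝ (deriv (u n)) t)
    (hToda_b : ∀ n : ℤ, 0 ≤ n → ∀ t ∈ Ω, deriv (b n) t = u (n + 1) t - u n t)
    (hToda_u : ∀ n : ℤ, 0 ≤ n → ∀ t ∈ Ω,
      deriv (u n) t = u n t * (b n t - b (n - 1) t))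
    (hu0 : ∀ t ∈ Ω, u 0 t = t)
    (hb0 : ∀ t ∈ Ω, b 0 t = 1 / t)
    (hbm1 : ∀ t ∈ Ω, b (-1) t = 0)
    (hune : ∀ n : ℤ, 0 ≤ n → ∀ t ∈ Ω, u n t ≠ 0) :
    ∀ N : ℕ, ∀ t ∈ Ω,
      deriv (deriv (b (N : ℤ))) t
        = 2 * (b (N : ℤ) t) ^ 3 - 4 * t * b (N : ℤ) t + 4 * ((N : ℝ) + 1) := by
  -- t ≠ 0 on Ω
  have hne : ∀ t ∈ Ω, (t : ℝ) ≠ 0 := fun t ht h => h0 (h ▸ ht)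
  -- a function vanishing on Ω has zero derivative on Ω
  have hdz : ∀ (F : ℝ → ℝ), (∀ s ∈ Ω, F s = 0) → ∀ t ∈ Ω, deriv F t = 0 := by
    intro F hF t ht
    have hev : F =ᶠ[nhds t] fun _ => (0 : ℝ) :=
      Filter.eventuallyEq_of_mem (hΩopen.mem_nhds ht) hF
    rw [hev.deriv_eq]
    simp
  -- key induction: P(n) and Q(n)
  have key : ∀ k : ℕ,
      (∀ t ∈ Ω, u ((k : ℤ) + 1) t + u (k : ℤ) t + (b (k : ℤ) t) ^ 2 = 2 * t) ∧
      (∀ t ∈ Ω, u (k : ℤ) t * (b (k : ℤ) t + b ((k : ℤ) - 1) t) = 2 * (k : ℝ) + 1) := by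
    intro k
    induction k with
    | zero =>
      constructor
      · intro t ht
        have htne := hne t ht
        have hdb0 : deriv (b 0) t = -(t ^ 2)⁻¹ := by
          have hev : b 0 =ᶠ[nhds t] fun s => s⁻¹ := by
            refine Filter.eventuallyEq_of_mem (hΩopen.mem_nhds ht) ?_
            intro s hs
            simpa [one_div] using hb0 s hs
          rw [hev.deriv_eq, deriv_inv]
        have h1 := hToda_b 0 le_rfl t ht
        rw [hdb0] at h1
        have hu1 : u 1 t = t - (t ^ 2)⁻¹ := by
          rw [hu0 t ht] at h1; linarith
        simp only [Int.cast_zero, Nat.cast_zero, zero_add]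
        rw [hu1, hu0 t ht, hb0 t ht]
        field_simp
        ring
      · intro t ht
        simp only [Nat.cast_zero, zero_sub]
        rw [hu0 t ht, hb0 t ht, hbm1 t ht]
        field_simp [hne t ht]
        ring
    | succ k ih =>
      obtain ⟨hP, hQ⟩ := ih
      set n : ℤ := (k : ℤ) with hn
      have hn0 : (0 : ℤ) ≤ n := Int.ofNat_nonneg k
      have hn1 : (-1 : ℤ) ≤ n := by omega
      -- Q(n+1) : u(n+1)(b(n+1)+b n) = 2k+3, by differentiating P(n)
      have hQ1 : ∀ t ∈ Ω, u (n + 1) t * (b (n + 1) t + b n t) = 2 * (k : ℝ) + 3 := by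
        intro t ht
        have h1 : HasDerivAt (fun s => u (n + 1) s + u n s + (b n s) ^ 2 - 2 * s)
            (deriv (u (n + 1)) t + deriv (u n) t +
              (2 : ℕ) * (b n t) ^ 1 * deriv (b n) t - 2 * 1) t := by
          exact ((((hud (n + 1) (by omega) t ht).hasDerivAt.add
            (hud n hn1 t ht).hasDerivAt).add
            ((hbd n hn1 t ht).hasDerivAt.pow 2)).sub
            ((hasDerivAt_id t).const_mul 2))
        have h2 : deriv (fun s => u (n + 1) s + u n s + (b n s) ^ 2 - 2 * s) t = 0 := by
          apply hdz _ _ t ht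
          intro s hs
          have := hP s hs
          linarith
        have h3 := h1.deriv
        rw [h2] at h3
        have hdu1 := hToda_u (n + 1) (by omega) t ht
        have hdun := hToda_u n hn0 t ht
        have hdbn := hToda_b n hn0 t ht
        have hidx : n + 1 - 1 = n := by ring
        rw [hidx] at hdu1
        rw [hdu1, hdun, hdbn] at h3
        have hQn := hQ t ht
        push_cast at h3 hQn ⊢
        nlinarith [h3, hQn]
      -- P(n+1) : u(n+2)+u(n+1)+b(n+1)^2 = 2t, by differentiating Q(n+1)
      have hP1 : ∀ t ∈ Ω, u (n + 1 + 1) t + u (n + 1) t + (b (n + 1) t) ^ 2 = 2 * t := by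
        intro t ht
        have h1 : HasDerivAt
            (fun s => u (n + 1) s * (b (n + 1) s + b n s) - (2 * (k : ℝ) + 3))
            (deriv (u (n + 1)) t * (b (n + 1) t + b n t) +
              u (n + 1) t * (deriv (b (n + 1)) t + deriv (b n) t) - 0) t := by
          exact ((hud (n + 1) (by omega) t ht).hasDerivAt.mul
            ((hbd (n + 1) (by omega) t ht).hasDerivAt.add
              (hbd n hn1 t ht).hasDerivAt)).sub (hasDerivAt_const t _)
        have h2 : deriv
            (fun s => u (n + 1) s * (b (n + 1) s + b n s) - (2 * (k : ℝ) + 3)) t = 0 := by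
          apply hdz _ _ t ht
          intro s hs
          have := hQ1 s hs
          linarith
        have h3 := h1.deriv
        rw [h2] at h3
        have hdu1 := hToda_u (n + 1) (by omega) t ht
        have hidx : n + 1 - 1 = n := by ring
        rw [hidx] at hdu1
        have hdb1 := hToda_b (n + 1) (by omega) t ht
        have hdbn := hToda_b n hn0 t ht
        rw [hdu1, hdb1, hdbn] at h3
        have hune1 := hune (n + 1) (by omega) t ht
        have h4 : u (n + 1) t *
            (u (n + 1 + 1) t - u n t + ((b (n + 1) t) ^ 2 - (b n t) ^ 2)) = 0 := by
          nlinarith [h3]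
        have h5 : u (n + 1 + 1) t - u n t + ((b (n + 1) t) ^ 2 - (b n t) ^ 2) = 0 := by
          rcases mul_eq_zero.mp h4 with h | h
          · exact absurd h hune1
          · exact h
        have hPn := hP t ht
        linarith
      constructor
      · intro t ht
        have := hP1 t ht
        push_cast
        convert this using 3 <;> push_cast <;> ring
      · intro t ht
        have := hQ1 t ht
        have hidx : ((k : ℤ) + 1 : ℤ) - 1 = n := by omega
        push_cast
        rw [show ((k : ℤ) + 1 : ℤ) = n + 1 by rfl] at *
        rw [hidx]
        rw [this]
        push_cast
        ring
  -- main conclusion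
  intro N t ht
  have hn0 : (0 : ℤ) ≤ (N : ℤ) := Int.ofNat_nonneg N
  have hn1 : (-1 : ℤ) ≤ (N : ℤ) := by omega
  have hdd : deriv (deriv (b (N : ℤ))) t =
      deriv (u ((N : ℤ) + 1)) t - deriv (u (N : ℤ)) t := by
    have hev : deriv (b (N : ℤ)) =ᶠ[nhds t] fun s => u ((N : ℤ) + 1) s - u (N : ℤ) s :=
      Filter.eventuallyEq_of_mem (hΩopen.mem_nhds ht) (fun s hs => hToda_b _ hn0 s hs)
    rw [hev.deriv_eq]
    exact ((hud _ (by omega) t ht).hasDerivAt.sub (hud _ hn1 t ht).hasDerivAt).deriv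
  have hdu1 := hToda_u ((N : ℤ) + 1) (by omega) t ht
  have hidx : (N : ℤ) + 1 - 1 = (N : ℤ) := by ring
  rw [hidx] at hdu1
  have hdun := hToda_u (N : ℤ) hn0 t ht
  have hP := (key N).1 t ht
  have hQ := (key N).2 t ht
  have hQ1 := (key (N + 1)).2 t ht
  push_cast at hQ1
  rw [show ((N:ℤ) + 1 - 1) = (N:ℤ) by ring] at hQ1
  rw [hdd, hdu1, hdun]
  linear_combination hQ1 + hQ - 2 * (b (N:ℤ) t) * hP
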